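/- arXiv:2403.10458 — 2 statements merged into one kernel-verified Lean document; each statement's English description precedes it below -/
import Mathlib

section
/- Let u : S¹ → ℝ be a positive W^{1,1} function on the circle (of length 2π) with ∫ u dx = 1. Then ∫_{S¹} arctan(|∂ₓu|/u)·|∂ₓu| dx ≥ arctan(‖∂ₓu‖_{L¹}) · ‖∂ₓu‖_{L¹}. -/
open Real intervalIntegral

lemma mulArctan_hasDeriv (x : ℝ) :
    HasDerivAt (fun t : ℝ => t * Real.arctan t) (Real.arctan x + x / (1 + x ^ 2)) x := by
  have h := (hasDerivAt_id x).mul (Real.hasDerivAt_arctan x)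
  refine h.congr_deriv ?_
  simp [id]
  ring

lemma Fprime_hasDeriv (x : ℝ) :
    HasDerivAt (fun t : ℝ => Real.arctan t + t / (1 + t ^ 2)) (2 / (1 + x ^ 2) ^ 2) x := by
  have h1 := Real.hasDerivAt_arctan x
  have hd : HasDerivAt (fun t : ℝ => 1 + t ^ 2) (2 * x) x := by
    simpa using ((hasDerivAt_pow 2 x).const_add 1)
  have h2 := (hasDerivAt_id x).div hd (by positivity : (1 : ℝ) + x ^ 2 ≠ 0)
  have h := h1.add h2
  refine h.congr_deriv ?_
  have hne : (1:ℝ) + x ^ 2 ≠ 0 := by positivity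
  simp only [id_eq]
  field_simp
  ring

lemma Fprime_mono : Monotone (fun t : ℝ => Real.arctan t + t / (1 + t ^ 2)) := by
  have : StrictMono (fun t : ℝ => Real.arctan t + t / (1 + t ^ 2)) := by
    apply strictMono_of_deriv_pos
    intro x
    rw [(Fprime_hasDeriv x).deriv]
    positivity
  exact this.monotone

lemma tangent_key (s t : ℝ) :
    (Real.arctan s + s / (1 + s ^ 2)) * (t - s) ≤ t * Real.arctan t - s * Real.arctan s := by
  set F : ℝ → ℝ := fun t => t * Real.arctan t with hF
  set F' : ℝ → ℝ := fun t => Real.arctan t + t / (1 + t ^ 2) with hF'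
  have hFd : ∀ x, HasDerivAt F (F' x) x := mulArctan_hasDeriv
  have hmono : Monotone F' := Fprime_mono
  rcases lt_trichotomy s t with h | h | h
  · obtain ⟨c, hc, hceq⟩ := exists_hasDerivAt_eq_slope F F' h
      (fun x _ => (hFd x).continuousAt.continuousWithinAt) (fun x _ => hFd x)
    have h1 : F' s ≤ F' c := hmono hc.1.le
    have h2 : F t - F s = F' c * (t - s) :=
      (div_eq_iff (sub_ne_zero.mpr h.ne')).mp hceq.symm
    have h3 : F' s * (t - s) ≤ F' c * (t - s) :=
      mul_le_mul_of_nonneg_right h1 (by linarith)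
    have : F' s * (t - s) ≤ F t - F s := by linarith
    simpa [hF, hF'] using this
  · subst h; simp
  · obtain ⟨c, hc, hceq⟩ := exists_hasDerivAt_eq_slope F F' h
      (fun x _ => (hFd x).continuousAt.continuousWithinAt) (fun x _ => hFd x)
    have h1 : F' c ≤ F' s := hmono hc.2.le
    have h2 : F s - F t = F' c * (s - t) :=
      (div_eq_iff (sub_ne_zero.mpr h.ne')).mp hceq.symm
    have h3 : F' c * (s - t) ≤ F' s * (s - t) :=
      mul_le_mul_of_nonneg_right h1 (by linarith)
    have : F' s * (t - s) ≤ F t - F s := by linarith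
    simpa [hF, hF'] using this

theorem stmt1 (u : ℝ → ℝ) (hu : ContDiff ℝ 1 u)
    (hper : Function.Periodic u (2 * Real.pi))
    (hpos : ∀ x, 0 < u x)
    (hmass : ∫ x in (0:ℝ)..(2 * Real.pi), u x = 1) :
    ∫ x in (0:ℝ)..(2 * Real.pi), Real.arctan (|deriv u x| / u x) * |deriv u x| ≥
      Real.arctan (∫ x in (0:ℝ)..(2 * Real.pi), |deriv u x|) *
        (∫ x in (0:ℝ)..(2 * Real.pi), |deriv u x|) := by
  have hcontu : Continuous u := hu.continuous
  have hcontd : Continuous (deriv u) := hu.continuous_deriv le_rfl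
  have habs : Continuous fun x => |deriv u x| := hcontd.abs
  set L : ℝ := ∫ x in (0:ℝ)..(2 * Real.pi), |deriv u x| with hL
  set c : ℝ := Real.arctan L + L / (1 + L ^ 2) with hc
  have hcontf : Continuous fun x => Real.arctan (|deriv u x| / u x) * |deriv u x| :=
    (Real.continuous_arctan.comp (habs.div hcontu fun x => (hpos x).ne')).mul habs
  set g : ℝ → ℝ := fun x => Real.arctan L * L * u x + c * (|deriv u x| - L * u x) with hg
  have hcontg : Continuous g := by
    apply Continuous.add
    · exact continuous_const.mul hcontu
    · exact continuous_const.mul (habs.sub (continuous_const.mul hcontu))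
  have hpt : ∀ x ∈ Set.Icc (0:ℝ) (2 * Real.pi), g x ≤
      Real.arctan (|deriv u x| / u x) * |deriv u x| := by
    intro x _
    have hux : 0 < u x := hpos x
    set v : ℝ := |deriv u x| / u x with hv
    have hvu : v * u x = |deriv u x| := div_mul_cancel₀ _ hux.ne'
    have hkey := tangent_key L v
    have hmul := mul_le_mul_of_nonneg_right hkey hux.le
    have hprod : v * Real.arctan v * u x = Real.arctan v * |deriv u x| := by
      rw [mul_comm v (Real.arctan v), mul_assoc, hvu]
    rw [← hc] at hmul
    have h4 : c * (v * u x) = c * |deriv u x| := by rw [hvu]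
    have h5 : L * Real.arctan L * u x = Real.arctan L * L * u x := by ring
    simp only [hg]
    nlinarith [hmul, hprod, h4, h5]
  have hIf : IntervalIntegrable (fun x => Real.arctan (|deriv u x| / u x) * |deriv u x|)
      MeasureTheory.volume 0 (2 * Real.pi) := hcontf.intervalIntegrable _ _
  have hIg : IntervalIntegrable g MeasureTheory.volume 0 (2 * Real.pi) :=
    hcontg.intervalIntegrable _ _
  have hmono := intervalIntegral.integral_mono_on
    (by positivity : (0:ℝ) ≤ 2 * Real.pi) hIg hIf hpt
  have hIg1 : IntervalIntegrable (fun x => Real.arctan L * L * u x)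
      MeasureTheory.volume 0 (2 * Real.pi) :=
    (continuous_const.mul hcontu).intervalIntegrable _ _
  have hIg2 : IntervalIntegrable (fun x => c * (|deriv u x| - L * u x))
      MeasureTheory.volume 0 (2 * Real.pi) :=
    (continuous_const.mul (habs.sub (continuous_const.mul hcontu))).intervalIntegrable _ _
  have hId : IntervalIntegrable (fun x => |deriv u x|)
      MeasureTheory.volume 0 (2 * Real.pi) := habs.intervalIntegrable _ _
  have hILu : IntervalIntegrable (fun x => L * u x)
      MeasureTheory.volume 0 (2 * Real.pi) :=
    (continuous_const.mul hcontu).intervalIntegrable _ _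
  have hgval : ∫ x in (0:ℝ)..(2 * Real.pi), g x = Real.arctan L * L := by
    simp only [hg]
    rw [intervalIntegral.integral_add hIg1 hIg2,
      intervalIntegral.integral_const_mul, intervalIntegral.integral_const_mul,
      intervalIntegral.integral_sub hId hILu, intervalIntegral.integral_const_mul,
      hmass, ← hL]
    ring
  rw [ge_iff_le]
  calc Real.arctan L * L = ∫ x in (0:ℝ)..(2 * Real.pi), g x := hgval.symm
    _ ≤ _ := hmono
end

section
/- Let u : S¹ → ℝ be a positive W^{1,1} function on the circle of length 2π with ∫ u dx = 1. Then ∫_{S¹} arctan(|∂ₓu|/u)·(|∂ₓu|/u) dx ≥ (1/(4π)) · arctan( (∫|∂ₓu|)² / ∫|∂ₓu|·u ) · ( (∫|∂ₓu|)² / ∫|∂ₓu|·u ). -/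
open Real intervalIntegral

private lemma my_sin_le {x : ℝ} (hx : 0 ≤ x) : Real.sin x ≤ x := by
  rcases eq_or_lt_of_le hx with h | h
  · simp [← h]
  · exact (Real.sin_lt h).le

private lemma arctan_ge_sin {x : ℝ} (hx : 0 ≤ x) :
    x / Real.sqrt (1 + x ^ 2) ≤ Real.arctan x := by
  have h0 : 0 ≤ Real.arctan x := by
    have := Real.arctan_strictMono.monotone hx
    simpa using this
  have := my_sin_le h0
  rwa [Real.sin_arctan] at this

private lemma my_arctan_le_self {x : ℝ} (hx : 0 ≤ x) : Real.arctan x ≤ x := by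
  rcases eq_or_lt_of_le hx with h | h
  · simp [← h]
  · have h1 : 0 < Real.arctan x := by
      have := Real.arctan_strictMono h
      simpa using this
    have h2 := Real.lt_tan h1 (Real.arctan_lt_pi_div_two x)
    rw [Real.tan_arctan] at h2
    exact h2.le

private lemma arctan_sub_lower {m t : ℝ} (hm : 0 ≤ m) (hmt : m ≤ t) :
    (t - m) / (Real.sqrt (1 + t ^ 2) * Real.sqrt (1 + m ^ 2)) ≤
      Real.arctan t - Real.arctan m := by
  have hS : (0:ℝ) < Real.sqrt (1 + t ^ 2) := Real.sqrt_pos.2 (by positivity)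
  have hM : (0:ℝ) < Real.sqrt (1 + m ^ 2) := Real.sqrt_pos.2 (by positivity)
  have hsin : Real.sin (Real.arctan t - Real.arctan m) =
      (t - m) / (Real.sqrt (1 + t ^ 2) * Real.sqrt (1 + m ^ 2)) := by
    rw [Real.sin_sub, Real.sin_arctan, Real.cos_arctan, Real.sin_arctan, Real.cos_arctan]
    field_simp
  have h0 : 0 ≤ Real.arctan t - Real.arctan m :=
    sub_nonneg.2 (Real.arctan_strictMono.monotone hmt)
  have := my_sin_le h0
  rwa [hsin] at this

private lemma arctan_sub_upper {t m : ℝ} (ht : 0 ≤ t) (htm : t ≤ m) :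
    Real.arctan m - Real.arctan t ≤ (m - t) / (1 + t * m) := by
  have hm : 0 ≤ m := ht.trans htm
  have hS : (0:ℝ) < Real.sqrt (1 + t ^ 2) := Real.sqrt_pos.2 (by positivity)
  have hM : (0:ℝ) < Real.sqrt (1 + m ^ 2) := Real.sqrt_pos.2 (by positivity)
  have htm1 : (0:ℝ) < 1 + t * m := by positivity
  have h0 : 0 ≤ Real.arctan m - Real.arctan t :=
    sub_nonneg.2 (Real.arctan_strictMono.monotone htm)
  rcases eq_or_lt_of_le h0 with h | h
  · rw [← h]
    exact div_nonneg (by linarith) htm1.le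
  · have hlt : Real.arctan m - Real.arctan t < Real.pi / 2 := by
      have h1 := Real.arctan_lt_pi_div_two m
      have h2 : 0 ≤ Real.arctan t := by
        have := Real.arctan_strictMono.monotone ht
        simpa using this
      linarith
    have htan := Real.lt_tan h hlt
    have hsin : Real.sin (Real.arctan m - Real.arctan t) =
        (m - t) / (Real.sqrt (1 + m ^ 2) * Real.sqrt (1 + t ^ 2)) := by
      rw [Real.sin_sub, Real.sin_arctan, Real.cos_arctan, Real.sin_arctan, Real.cos_arctan]
      field_simp
    have hcos : Real.cos (Real.arctan m - Real.arctan t) =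
        (1 + t * m) / (Real.sqrt (1 + m ^ 2) * Real.sqrt (1 + t ^ 2)) := by
      rw [Real.cos_sub, Real.sin_arctan, Real.cos_arctan, Real.sin_arctan, Real.cos_arctan]
      field_simp
    have htaneq : Real.tan (Real.arctan m - Real.arctan t) = (m - t) / (1 + t * m) := by
      rw [Real.tan_eq_sin_div_cos, hsin, hcos]
      field_simp
    rw [htaneq] at htan
    linarith

/-- Tangent line inequality for the convex function `t ↦ t * arctan t`. -/
private lemma tangent_ineq {m t : ℝ} (hm : 0 ≤ m) (ht : 0 ≤ t) :
    Real.arctan m * t + m / (1 + m ^ 2) * (t - m) ≤ Real.arctan t * t := by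
  rcases le_total m t with h | h
  · have key := arctan_sub_lower hm h
    set S := Real.sqrt (1 + t ^ 2) with hSdef
    set M := Real.sqrt (1 + m ^ 2) with hMdef
    have hS : (0:ℝ) < S := Real.sqrt_pos.2 (by positivity)
    have hM : (0:ℝ) < M := Real.sqrt_pos.2 (by positivity)
    have hS2 : S ^ 2 = 1 + t ^ 2 := Real.sq_sqrt (by positivity)
    have hM2 : M ^ 2 = 1 + m ^ 2 := Real.sq_sqrt (by positivity)
    -- m * S ≤ t * M
    have hsq : (m * S) ^ 2 ≤ (t * M) ^ 2 := by nlinarith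
    have h2 : m * S ≤ t * M := by nlinarith [mul_nonneg hm hS.le, mul_nonneg ht hM.le]
    -- t * ((t - m)/(S*M)) ≥ m/(1+m²) * (t-m)
    have h3 : m / (1 + m ^ 2) * (t - m) ≤ t * ((t - m) / (S * M)) := by
      rw [div_mul_eq_mul_div, mul_div_assoc', div_le_div_iff₀ (by positivity) (by positivity)]
      have hM2' : t * (t - m) * M ^ 2 = t * (t - m) * (1 + m ^ 2) := by rw [hM2]
      nlinarith [mul_nonneg (mul_nonneg (sub_nonneg.2 h) hM.le) (sub_nonneg.2 h2), hM2']
    have h4 : t * ((t - m) / (S * M)) ≤ t * (Real.arctan t - Real.arctan m) :=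
      mul_le_mul_of_nonneg_left key ht
    nlinarith
  · have key := arctan_sub_upper ht h
    have h1 : (0:ℝ) < 1 + t * m := by positivity
    have h3 : t * ((m - t) / (1 + t * m)) ≤ m / (1 + m ^ 2) * (m - t) := by
      rw [mul_div_assoc', div_mul_eq_mul_div, div_le_div_iff₀ (by positivity) (by positivity)]
      nlinarith [sq_nonneg (m - t), mul_nonneg ht hm]
    have h4 : t * (Real.arctan m - Real.arctan t) ≤ t * ((m - t) / (1 + t * m)) :=
      mul_le_mul_of_nonneg_left key ht
    nlinarith

private lemma scalar_ineq {R : ℝ} (hR : 0 ≤ R) :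
    1 / (4 * Real.pi) * Real.arctan R * R ≤ R * Real.arctan (R / (2 * Real.pi)) := by
  have hπ := Real.pi_pos
  have hπ3 := Real.pi_gt_three
  have key : Real.arctan R / (4 * Real.pi) ≤ Real.arctan (R / (2 * Real.pi)) := by
    rcases le_total R (2 * Real.pi) with h | h
    · have hx : (0:ℝ) ≤ R / (2 * Real.pi) := by positivity
      have h2 := arctan_ge_sin hx
      have h3 : Real.sqrt (1 + (R / (2 * Real.pi)) ^ 2) ≤ 2 := by
        have hle : (1 + (R / (2 * Real.pi)) ^ 2) ≤ 4 := by
          have : R / (2 * Real.pi) ≤ 1 := by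
            rw [div_le_one (by positivity)]; exact h
          nlinarith
        calc Real.sqrt (1 + (R / (2 * Real.pi)) ^ 2) ≤ Real.sqrt 4 := Real.sqrt_le_sqrt hle
          _ = 2 := by
              rw [show (4:ℝ) = 2 ^ 2 by norm_num, Real.sqrt_sq (by norm_num)]
      have h4 : R / (2 * Real.pi) / 2 ≤
          R / (2 * Real.pi) / Real.sqrt (1 + (R / (2 * Real.pi)) ^ 2) := by
        gcongr
      have h5 : Real.arctan R ≤ R := my_arctan_le_self hR
      have h6 : Real.arctan R / (4 * Real.pi) ≤ R / (4 * Real.pi) := by gcongr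
      have h7 : R / (4 * Real.pi) = R / (2 * Real.pi) / 2 := by ring
      linarith
    · have h1 : (1:ℝ) ≤ R / (2 * Real.pi) := by
        rw [le_div_iff₀ (by positivity)]; linarith
      have h2 : Real.pi / 4 ≤ Real.arctan (R / (2 * Real.pi)) := by
        rw [← Real.arctan_one]
        exact Real.arctan_strictMono.monotone h1
      have h3 : Real.arctan R / (4 * Real.pi) ≤ (Real.pi / 2) / (4 * Real.pi) := by
        gcongr
        exact (Real.arctan_lt_pi_div_two R).le
      have h4 : (Real.pi / 2) / (4 * Real.pi) = 1 / 8 := by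
        field_simp
        ring
      linarith
  calc 1 / (4 * Real.pi) * Real.arctan R * R = (Real.arctan R / (4 * Real.pi)) * R := by ring
    _ ≤ Real.arctan (R / (2 * Real.pi)) * R := mul_le_mul_of_nonneg_right key hR
    _ = R * Real.arctan (R / (2 * Real.pi)) := by ring

theorem stmt2 (u : ℝ → ℝ) (hu : ContDiff ℝ 1 u)
    (hper : Function.Periodic u (2 * Real.pi))
    (hpos : ∀ x, 0 < u x)
    (hmass : ∫ x in (0:ℝ)..(2 * Real.pi), u x = 1)
    (hden : 0 < ∫ x in (0:ℝ)..(2 * Real.pi), |deriv u x| * u x) :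
    ∫ x in (0:ℝ)..(2 * Real.pi), Real.arctan (|deriv u x| / u x) * (|deriv u x| / u x) ≥
      (1 / (4 * Real.pi)) *
        Real.arctan ((∫ x in (0:ℝ)..(2 * Real.pi), |deriv u x|) ^ 2 /
            (∫ x in (0:ℝ)..(2 * Real.pi), |deriv u x| * u x)) *
        ((∫ x in (0:ℝ)..(2 * Real.pi), |deriv u x|) ^ 2 /
            (∫ x in (0:ℝ)..(2 * Real.pi), |deriv u x| * u x)) := by
  have hπ := Real.pi_pos
  have hab : (0:ℝ) ≤ 2 * Real.pi := by positivity
  have hcu : Continuous u := hu.continuous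
  have hcd : Continuous (deriv u) := hu.continuous_deriv le_rfl
  have hune : ∀ x, u x ≠ 0 := fun x => (hpos x).ne'
  have hcg : Continuous (fun x => |deriv u x| / u x) :=
    (hcd.abs).div hcu hune
  have hcabs : Continuous (fun x => |deriv u x|) := hcd.abs
  set A := ∫ x in (0:ℝ)..(2 * Real.pi), |deriv u x| with hAdef
  set B := ∫ x in (0:ℝ)..(2 * Real.pi), |deriv u x| * u x with hBdef
  set C := ∫ x in (0:ℝ)..(2 * Real.pi), |deriv u x| / u x with hCdef
  -- upper bound for u
  obtain ⟨x₀, hx₀mem, hx₀max⟩ :=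
    (isCompact_Icc (a := (0:ℝ)) (b := 2 * Real.pi)).exists_isMaxOn
      (Set.nonempty_Icc.2 hab) hcu.continuousOn
  set Mx := u x₀ with hMxdef
  have hM0 : 0 < Mx := hpos x₀
  have hMle : ∀ x ∈ Set.Icc (0:ℝ) (2 * Real.pi), u x ≤ Mx := fun x hx => hx₀max hx
  -- B ≤ Mx * A
  have hBA : B ≤ Mx * A := by
    have h1 : B ≤ ∫ x in (0:ℝ)..(2 * Real.pi), Mx * |deriv u x| := by
      apply intervalIntegral.integral_mono_on hab
        ((hcabs.mul hcu).intervalIntegrable _ _)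
        ((continuous_const.mul hcabs).intervalIntegrable _ _)
      intro x hx
      exact mul_le_mul_of_nonneg_left (hMle x hx) (abs_nonneg _) |>.trans_eq (mul_comm _ _)
    rwa [intervalIntegral.integral_const_mul] at h1
  have hA : 0 < A := by nlinarith
  -- A ≤ Mx * C
  have hAC : A ≤ Mx * C := by
    have h1 : A ≤ ∫ x in (0:ℝ)..(2 * Real.pi), Mx * (|deriv u x| / u x) := by
      apply intervalIntegral.integral_mono_on hab
        (hcabs.intervalIntegrable _ _)
        ((continuous_const.fun_mul hcg).intervalIntegrable _ _)
      intro x hx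
      rw [mul_div_assoc']
      rw [le_div_iff₀ (hpos x)]
      exact mul_le_mul_of_nonneg_left (hMle x hx) (abs_nonneg _) |>.trans_eq (mul_comm _ _)
    rwa [intervalIntegral.integral_const_mul] at h1
  have hC : 0 < C := by nlinarith
  -- Cauchy-Schwarz: A^2 ≤ B * C
  have hCS : A ^ 2 ≤ B * C := by
    set c : ℝ := A / C with hcdef
    have hcC : c * C = A := div_mul_cancel₀ A hC.ne'
    have hnn : 0 ≤ ∫ x in (0:ℝ)..(2 * Real.pi),
        (|deriv u x| * u x - 2 * c * |deriv u x| + c ^ 2 * (|deriv u x| / u x)) := by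
      apply intervalIntegral.integral_nonneg hab
      intro x _
      have hux := hpos x
      have key : |deriv u x| * u x - 2 * c * |deriv u x| + c ^ 2 * (|deriv u x| / u x)
          = (|deriv u x| / u x) * (u x - c) ^ 2 := by
        field_simp
        ring
      rw [key]
      positivity
    have hsplit : (∫ x in (0:ℝ)..(2 * Real.pi),
        (|deriv u x| * u x - 2 * c * |deriv u x| + c ^ 2 * (|deriv u x| / u x)))
        = B - 2 * c * A + c ^ 2 * C := by
      rw [intervalIntegral.integral_add
            (((hcabs.fun_mul hcu).fun_sub ((continuous_const.fun_mul hcabs))).intervalIntegrable _ _)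
            ((continuous_const.fun_mul hcg).intervalIntegrable _ _),
          intervalIntegral.integral_sub ((hcabs.fun_mul hcu).intervalIntegrable _ _)
            ((continuous_const.fun_mul hcabs).intervalIntegrable _ _),
          intervalIntegral.integral_const_mul, intervalIntegral.integral_const_mul]
    rw [hsplit] at hnn
    nlinarith
  set R := A ^ 2 / B with hRdef
  have hR0 : 0 ≤ R := by positivity
  have hRC : R ≤ C := by
    rw [hRdef, div_le_iff₀ hden]
    nlinarith
  set m := R / (2 * Real.pi) with hmdef
  have hm0 : 0 ≤ m := by positivity
  have hmR : 2 * Real.pi * m = R := by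
    rw [hmdef]; field_simp
  -- tangent line integral bound
  have hmono : (∫ x in (0:ℝ)..(2 * Real.pi),
        (Real.arctan m * (|deriv u x| / u x) + m / (1 + m ^ 2) * (|deriv u x| / u x - m)))
      ≤ ∫ x in (0:ℝ)..(2 * Real.pi),
          Real.arctan (|deriv u x| / u x) * (|deriv u x| / u x) := by
    apply intervalIntegral.integral_mono_on hab
      (((continuous_const.mul hcg).add
          (continuous_const.mul (hcg.sub continuous_const))).intervalIntegrable _ _)
      (((Real.continuous_arctan.comp hcg).mul hcg).intervalIntegrable _ _)
    intro x _
    have hgx : 0 ≤ |deriv u x| / u x := div_nonneg (abs_nonneg _) (hpos x).le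
    exact tangent_ineq hm0 hgx
  have hsplit2 : (∫ x in (0:ℝ)..(2 * Real.pi),
        (Real.arctan m * (|deriv u x| / u x) + m / (1 + m ^ 2) * (|deriv u x| / u x - m)))
      = Real.arctan m * C + m / (1 + m ^ 2) * (C - 2 * Real.pi * m) := by
    rw [intervalIntegral.integral_add
          ((continuous_const.fun_mul hcg).intervalIntegrable _ _)
          ((continuous_const.fun_mul (hcg.fun_sub continuous_const)).intervalIntegrable _ _),
        intervalIntegral.integral_const_mul, intervalIntegral.integral_const_mul,
        intervalIntegral.integral_sub (hcg.intervalIntegrable _ _)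
          (intervalIntegrable_const),
        intervalIntegral.integral_const]
    simp [smul_eq_mul, hCdef]
  rw [hsplit2] at hmono
  have harctanm : 0 ≤ Real.arctan m := by
    have := Real.arctan_strictMono.monotone hm0
    simpa using this
  have hk : 0 ≤ m / (1 + m ^ 2) := by positivity
  have hlow : R * Real.arctan m ≤
      Real.arctan m * C + m / (1 + m ^ 2) * (C - 2 * Real.pi * m) := by
    have h1 : Real.arctan m * R ≤ Real.arctan m * C := by
      exact mul_le_mul_of_nonneg_left hRC harctanm
    have h2 : 0 ≤ m / (1 + m ^ 2) * (C - 2 * Real.pi * m) := by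
      apply mul_nonneg hk
      rw [hmR]
      linarith
    nlinarith
  have hfinal := scalar_ineq hR0
  rw [← hmdef] at hfinal
  rw [ge_iff_le]
  calc 1 / (4 * Real.pi) * Real.arctan R * R ≤ R * Real.arctan m := hfinal
    _ ≤ Real.arctan m * C + m / (1 + m ^ 2) * (C - 2 * Real.pi * m) := hlow
    _ ≤ _ := hmono
end
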